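/- arXiv:1805.06990 — 7 statements merged into one kernel-verified Lean document; each statement's English description precedes it below -/
import Mathlib

section
/- For any monotone non-negative function f on the integer lattice with f(0)=0, the diminishing-return ratio of f is at most the submodularity ratio of f. That is, if γ_d ∈ [0,1] satisfies γ_d·(f(w+s)−f(w)) ≤ f(v+s)−f(v) for all unit vectors s and all v ≤ w with w+s ≤ b, then for all v ≤ w ≤ b, γ_d·(f(w)−f(v)) ≤ Σ_{s in the multiset w−v} (f(v+s)−f(v)). -/
/-- The unit vector (indicator) of an element `s`. -/
def unitVec {S : Type*} [DecidableEq S] (s : S) : S → ℕ := fun i => if i = s then 1 else 0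

/-- Proposition 1: the DR ratio is at most the submodularity ratio, in the sense that
the DR inequality with constant `γd` implies the submodularity-ratio inequality with
the same constant. -/
theorem dr_ratio_le_submodularity_ratio
    {S : Type*} [Fintype S] [DecidableEq S]
    (b : S → ℕ) (f : (S → ℕ) → ℝ) (γd : ℝ)
    (hnonneg : ∀ x : S → ℕ, x ≤ b → 0 ≤ f x)
    (hmono : ∀ v w : S → ℕ, v ≤ w → w ≤ b → f v ≤ f w)
    (hzero : f 0 = 0)
    (hγd0 : 0 ≤ γd) (hγd1 : γd ≤ 1)
    (hDR : ∀ (s : S) (v w : S → ℕ), v ≤ w → w + unitVec s ≤ b →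
      γd * (f (w + unitVec s) - f w) ≤ f (v + unitVec s) - f v) :
    ∀ v w : S → ℕ, v ≤ w → w ≤ b →
      γd * (f w - f v) ≤ ∑ s : S, ((w s - v s : ℕ) : ℝ) * (f (v + unitVec s) - f v) := by
  intro v
  suffices H : ∀ n (w : S → ℕ), v ≤ w → w ≤ b → ∑ s, (w s - v s) = n →
      γd * (f w - f v) ≤ ∑ s : S, ((w s - v s : ℕ) : ℝ) * (f (v + unitVec s) - f v) by
    intro w hvw hwb
    exact H _ w hvw hwb rfl
  intro n
  induction n with
  | zero =>
    intro w hvw hwb hsum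
    have hw : w = v := by
      funext t
      have h1 : w t - v t = 0 := by
        by_contra h
        exact h (Finset.sum_eq_zero_iff.mp hsum t (Finset.mem_univ t))
      have hle : v t ≤ w t := hvw t
      omega
    subst hw
    simp
  | succ n ih =>
    intro w hvw hwb hsum
    have hex : ∃ s, v s < w s := by
      by_contra h
      push_neg at h
      have : ∑ s, (w s - v s) = 0 := by
        apply Finset.sum_eq_zero
        intro t _
        have := h t
        omega
      omega
    obtain ⟨s, hs⟩ := hex
    obtain ⟨w', hw'apply⟩ : ∃ w' : S → ℕ, ∀ i, w' i = w i - (if i = s then 1 else 0) :=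
      ⟨w - unitVec s, fun i => rfl⟩
    have hw'eq : w' + unitVec s = w := by
      funext i
      have hle : v i ≤ w i := hvw i
      simp only [Pi.add_apply, hw'apply, unitVec]
      by_cases hi : i = s <;> simp [hi] <;> omega
    have hvw' : v ≤ w' := by
      intro i
      have hle : v i ≤ w i := hvw i
      rw [hw'apply]
      by_cases hi : i = s <;> simp [hi] <;> omega
    have hw'b : w' ≤ b := by
      intro i
      have hbi : w i ≤ b i := hwb i
      have h2 : w' i ≤ w i := by rw [hw'apply]; exact Nat.sub_le _ _
      exact le_trans h2 hbi
    have hsum' : ∑ t, (w' t - v t) = n := by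
      have : ∀ t, w t - v t = (w' t - v t) + (if t = s then 1 else 0) := by
        intro t
        have h1 : v t ≤ w t := hvw t
        rw [hw'apply]
        by_cases ht : t = s <;> simp [ht] <;> omega
      rw [Finset.sum_congr rfl (fun t _ => this t)] at hsum
      rw [Finset.sum_add_distrib, Finset.sum_ite_eq' Finset.univ s (fun _ => 1)] at hsum
      simpa using hsum
    have hIH := ih w' hvw' hw'b hsum'
    have hDRs := hDR s v w' hvw' (by rw [hw'eq]; exact hwb)
    rw [hw'eq] at hDRs
    have hRHS : ∑ t : S, ((w t - v t : ℕ) : ℝ) * (f (v + unitVec t) - f v)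
        = (∑ t : S, ((w' t - v t : ℕ) : ℝ) * (f (v + unitVec t) - f v))
          + (f (v + unitVec s) - f v) := by
      have key : ∀ t, ((w t - v t : ℕ) : ℝ) * (f (v + unitVec t) - f v)
          = ((w' t - v t : ℕ) : ℝ) * (f (v + unitVec t) - f v)
            + (if t = s then (f (v + unitVec s) - f v) else 0) := by
        intro t
        by_cases ht : t = s
        · subst ht
          have h1 : w t - v t = (w' t - v t) + 1 := by
            have hle : v t ≤ w t := hvw t; rw [hw'apply]; simp; omega
          rw [h1]
          push_cast
          ring_nf
          simp [add_mul]
          ring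
        · have h1 : w t - v t = w' t - v t := by
            rw [hw'apply]; simp [ht]
          rw [h1]
          simp [ht]
      rw [Finset.sum_congr rfl (fun t _ => key t), Finset.sum_add_distrib,
        Finset.sum_ite_eq' Finset.univ s]
      simp
    rw [hRHS]
    have : γd * (f w - f v) = γd * (f w - f w') + γd * (f w' - f v) := by ring
    rw [this]
    linarith
end

section
/- Let f be monotone on the lattice and fix a current vector g, direction s, threshold τ > 0, and maximum step L ≥ 1. Suppose f(g+L·s)−f(g) < L·τ and f(g+s)−f(g) ≥ τ. Then there exists l with 1 ≤ l < L such that f(g+l·s)−f(g) ≥ l·τ and f(g+(l+1)·s)−f(g+l·s) < τ. -/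
/-- Existence of a pivot between 1 and L under the binary-search endpoint invariants. -/
theorem exists_pivot
    {S : Type*} [DecidableEq S]
    (f : (S → ℕ) → ℝ) (g : S → ℕ) (s : S) (τ : ℝ) (L : ℕ)
    (hτ : 0 < τ) (hL : 1 ≤ L)
    (htop : f (g + L • unitVec s) - f g < (L : ℝ) * τ)
    (hbot : τ ≤ f (g + unitVec s) - f g) :
    ∃ l : ℕ, 1 ≤ l ∧ l < L ∧
      (l : ℝ) * τ ≤ f (g + l • unitVec s) - f g ∧
      f (g + (l + 1) • unitVec s) - f (g + l • unitVec s) < τ := by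
  classical
  set P : ℕ → Prop := fun l => (l : ℝ) * τ ≤ f (g + l • unitVec s) - f g with hP
  have h1 : (1 : ℕ) • unitVec s = unitVec s := one_smul _ _
  have hP1 : P 1 := by
    show ((1 : ℕ) : ℝ) * τ ≤ f (g + (1 : ℕ) • unitVec s) - f g
    rw [h1, Nat.cast_one, one_mul]; exact hbot
  have hPLn : ¬ P L := not_le.mpr htop
  have hex : ∃ m, ¬ P m := ⟨L, hPLn⟩
  let m := Nat.find hex
  have hm : ¬ P m := Nat.find_spec hex
  have hmin : ∀ k < m, P k := fun k hk => by
    by_contra hk'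
    exact absurd (Nat.find_le hk') (not_le.mpr hk)
  have hmL : m ≤ L := Nat.find_le hPLn
  have hm2 : 2 ≤ m := by
    by_contra h
    interval_cases m' : m
    · have h0 : g + (0 : ℕ) • unitVec s = g := by
        funext x; simp
      refine hm ?_
      show ((0 : ℕ) : ℝ) * τ ≤ f (g + (0 : ℕ) • unitVec s) - f g
      rw [h0]; simp
    · exact hm hP1
  refine ⟨m - 1, by omega, by omega, hmin _ (by omega), ?_⟩
  have hl : P (m - 1) := hmin _ (by omega)
  have hm' : f (g + m • unitVec s) - f g < (m : ℝ) * τ := not_le.mp hm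
  have hsucc : (m - 1) + 1 = m := by omega
  rw [hsucc]
  have hc : ((m - 1 : ℕ) : ℝ) = (m : ℝ) - 1 := by
    push_cast [Nat.cast_sub (by omega : 1 ≤ m)]; ring
  rw [hP] at hl
  rw [hc] at hl
  nlinarith [hl, hm']
end

section
/- Let a sequence of positive integers l^1,…,l^T sum to k, let 0 < c ≤ 1, and let f(g^0)=0 with f(g^t) − f(g^{t−1}) ≥ (l^t·c/k)·(F − f(g^{t−1})) for all t, where F ≥ 0. Then f(g^T) ≥ (1 − e^{−c})·F. -/
/-- The key greedy recursion lemma: per-step improvement proportional to the remaining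
gap implies the `1 - e^{-c}` guarantee. -/
theorem greedy_recursion
    (T k : ℕ) (l : Fin T → ℕ) (c F : ℝ) (fg : ℕ → ℝ)
    (hk : 0 < k)
    (hl : ∀ t : Fin T, 0 < l t)
    (hsum : ∑ t : Fin T, l t = k)
    (hc0 : 0 < c) (hc1 : c ≤ 1)
    (hF : 0 ≤ F)
    (h0 : fg 0 = 0)
    (hstep : ∀ t : Fin T,
      ((l t : ℝ) * c / (k : ℝ)) * (F - fg t) ≤ fg (t + 1) - fg t) :
    (1 - Real.exp (-c)) * F ≤ fg T := by
  have hkR : (0:ℝ) < (k:ℝ) := by exact_mod_cast hk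
  set g : ℕ → ℝ := fun i => if h : i < T then (l ⟨i, h⟩ : ℝ) else 0 with hg
  have hgx : ∀ t : Fin T, g t = (l t : ℝ) := by
    intro t; simp [hg, t.isLt]
  have hle : ∀ t : Fin T, (l t : ℝ) * c / (k:ℝ) ≤ 1 := by
    intro t
    have h1 : l t ≤ k := hsum ▸ Finset.single_le_sum (fun i _ => Nat.zero_le _)
      (Finset.mem_univ t)
    have h2 : (l t : ℝ) * c ≤ (k:ℝ) := by
      calc (l t : ℝ) * c ≤ (l t : ℝ) * 1 :=
            mul_le_mul_of_nonneg_left hc1 (by positivity)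
        _ = (l t : ℝ) := mul_one _
        _ ≤ (k:ℝ) := by exact_mod_cast h1
    rw [div_le_one hkR]; exact h2
  have hfac : ∀ i ∈ Finset.range T, (0:ℝ) ≤ 1 - g i * c / (k:ℝ) := by
    intro i hi
    rw [Finset.mem_range] at hi
    have := hle ⟨i, hi⟩
    rw [hgx ⟨i, hi⟩] at *
    linarith [hle ⟨i, hi⟩]
  -- main induction
  have main : ∀ n, n ≤ T → F - fg n ≤ F * ∏ i ∈ Finset.range n, (1 - g i * c / (k:ℝ)) := by
    intro n
    induction n with
    | zero => intro _; simp [h0]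
    | succ m ih =>
      intro hm
      have hmT : m < T := hm
      have ihm := ih (le_of_lt hmT)
      have hs := hstep ⟨m, hmT⟩
      simp only at hs
      have key : F - fg (m+1) ≤ (F - fg m) * (1 - (l ⟨m, hmT⟩ : ℝ) * c / (k:ℝ)) := by
        nlinarith [hs]
      have hfacm : (0:ℝ) ≤ 1 - g m * c / (k:ℝ) := hfac m (Finset.mem_range.mpr hmT)
      rw [Finset.prod_range_succ]
      calc F - fg (m+1) ≤ (F - fg m) * (1 - g m * c / (k:ℝ)) := by
            rw [hgx ⟨m, hmT⟩]; exact key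
        _ ≤ (F * ∏ i ∈ Finset.range m, (1 - g i * c / (k:ℝ))) * (1 - g m * c / (k:ℝ)) :=
            mul_le_mul_of_nonneg_right ihm hfacm
        _ = F * ((∏ i ∈ Finset.range m, (1 - g i * c / (k:ℝ))) * (1 - g m * c / (k:ℝ))) := by
            ring
  have hmain := main T le_rfl
  -- product bound
  have hprod : ∏ i ∈ Finset.range T, (1 - g i * c / (k:ℝ)) ≤ Real.exp (-c) := by
    have hstep2 : ∀ i ∈ Finset.range T, 1 - g i * c / (k:ℝ) ≤ Real.exp (-(g i * c / (k:ℝ))) := by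
      intro i _
      have := Real.add_one_le_exp (-(g i * c / (k:ℝ)))
      linarith
    calc ∏ i ∈ Finset.range T, (1 - g i * c / (k:ℝ))
        ≤ ∏ i ∈ Finset.range T, Real.exp (-(g i * c / (k:ℝ))) :=
          Finset.prod_le_prod hfac hstep2
      _ = Real.exp (∑ i ∈ Finset.range T, -(g i * c / (k:ℝ))) := (Real.exp_sum _ _).symm
      _ = Real.exp (-c) := by
          congr 1
          have hsumg : ∑ i ∈ Finset.range T, g i = (k:ℝ) := by
            rw [← Fin.sum_univ_eq_sum_range]
            calc ∑ i : Fin T, g i = ∑ i : Fin T, (l i : ℝ) := by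
                  exact Finset.sum_congr rfl (fun i _ => hgx i)
              _ = (k:ℝ) := by exact_mod_cast hsum
          rw [Finset.sum_neg_distrib]
          have : ∑ i ∈ Finset.range T, g i * c / (k:ℝ)
              = (∑ i ∈ Finset.range T, g i) * c / (k:ℝ) := by
            rw [Finset.sum_mul, Finset.sum_div]
          rw [this, hsumg]
          field_simp
  have : F - fg T ≤ F * Real.exp (-c) := by
    calc F - fg T ≤ F * ∏ i ∈ Finset.range T, (1 - g i * c / (k:ℝ)) := hmain
      _ ≤ F * Real.exp (-c) := mul_le_mul_of_nonneg_left hprod hF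
  nlinarith
end

section
/- Suppose f is monotone with DR ratio at least γ_d ≥ ε > 0 and maximum singleton value M = max_s f(s), and f(Ω) ≥ M for the optimum Ω. Let g ≤ g′ with the multiset difference {g′}∖{g} = {s_1,…,s_ℓ}, ℓ ≤ k, and suppose for each i there exists h_i ≤ g with f(h_i + s_i) − f(h_i) < ε²M/k. Then f(g′) − f(g) ≤ ε·f(Ω); consequently, if f(g′) ≥ Φ·f(Ω) for some Φ > ε, then f(g) ≥ (Φ − ε)·f(Ω). -/
/-- Claim 1 (wlog claim): if every element added beyond `g` has small gain somewhere
below `g`, then completing `g` to `g'` changes the value by at most `ε f(Ω)`. -/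
theorem completion_loss_small
    {S : Type*} [Fintype S] [DecidableEq S]
    (f : (S → ℕ) → ℝ) (γd ε M : ℝ) (k : ℕ) (Ω g : S → ℕ)
    (ℓ : ℕ) (s : Fin ℓ → S)
    (hnonneg : ∀ x : S → ℕ, 0 ≤ f x)
    (hmono : ∀ v w : S → ℕ, v ≤ w → f v ≤ f w)
    (hzero : f 0 = 0)
    (hε : 0 < ε) (hγd : ε ≤ γd)
    (hDR : ∀ (i : S) (v w : S → ℕ), v ≤ w →
      γd * (f (w + unitVec i) - f w) ≤ f (v + unitVec i) - f v)
    (hM : ∀ i : S, f (unitVec i) ≤ M)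
    (hΩ : M ≤ f Ω)
    (hk : 0 < k) (hℓ : ℓ ≤ k)
    (g' : S → ℕ)
    (hg' : g' = g + ∑ i : Fin ℓ, unitVec (s i))
    (hsmall : ∀ i : Fin ℓ, ∃ h : S → ℕ, h ≤ g ∧
      f (h + unitVec (s i)) - f h < ε ^ 2 * M / (k : ℝ)) :
    f g' - f g ≤ ε * f Ω ∧
      ∀ Φ : ℝ, ε < Φ → Φ * f Ω ≤ f g' → (Φ - ε) * f Ω ≤ f g := by
  have hfΩ : 0 ≤ f Ω := hnonneg Ω
  have hkpos : (0:ℝ) < (k:ℝ) := by exact_mod_cast hk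
  -- turn the Fin sum into a range sum
  set t : ℕ → S → ℕ := fun i => if h : i < ℓ then unitVec (s ⟨i, h⟩) else 0 with ht
  have hg'2 : g' = g + ∑ i ∈ Finset.range ℓ, t i := by
    rw [hg', ← Fin.sum_univ_eq_sum_range]
    congr 1
    apply Finset.sum_congr rfl
    intro i _
    simp [ht, i.isLt]
  set P : ℕ → S → ℕ := fun i => g + ∑ j ∈ Finset.range i, t j with hP
  have htel : ∑ i ∈ Finset.range ℓ, (f (P (i+1)) - f (P i)) = f (P ℓ) - f (P 0) :=
    Finset.sum_range_sub (fun i => f (P i)) ℓ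
  have hP0 : P 0 = g := by simp [hP]
  have hPℓ : P ℓ = g' := by rw [hg'2]
  have hgle : ∀ i, g ≤ P i := fun i => le_add_of_nonneg_right (by positivity)
  have hterm : ∀ i ∈ Finset.range ℓ, f (P (i+1)) - f (P i) ≤ ε * f Ω / k := by
    intro i hi
    rw [Finset.mem_range] at hi
    have hPsucc : P (i+1) = P i + unitVec (s ⟨i, hi⟩) := by
      simp only [hP, Finset.sum_range_succ, ← add_assoc]
      congr 1
      simp [ht, hi]
    obtain ⟨h, hhg, hhsmall⟩ := hsmall ⟨i, hi⟩
    have hDRi := hDR (s ⟨i, hi⟩) h (P i) (le_trans hhg (hgle i))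
    have hx : 0 ≤ f (P i + unitVec (s ⟨i, hi⟩)) - f (P i) := by
      have := hmono (P i) (P i + unitVec (s ⟨i, hi⟩)) (le_add_of_nonneg_right (by positivity))
      linarith
    have hMΩ : ε ^ 2 * M / k ≤ ε ^ 2 * f Ω / k := by
      have h2 : ε ^ 2 * M ≤ ε ^ 2 * f Ω := by nlinarith
      exact div_le_div_of_nonneg_right h2 hkpos.le
    rw [hPsucc]
    have h2 : ε * (f (P i + unitVec (s ⟨i, hi⟩)) - f (P i))
        ≤ γd * (f (P i + unitVec (s ⟨i, hi⟩)) - f (P i)) :=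
      mul_le_mul_of_nonneg_right hγd hx
    have h3 : ε * (f (P i + unitVec (s ⟨i, hi⟩)) - f (P i)) < ε * (ε * f Ω / k) := by
      have heq : ε * (ε * f Ω / k) = ε ^ 2 * f Ω / k := by ring
      rw [heq]; linarith
    exact le_of_lt ((mul_lt_mul_iff_right₀ hε).mp h3)
  have hsumle : f g' - f g ≤ ℓ * (ε * f Ω / k) := by
    rw [← hP0, ← hPℓ, ← htel]
    calc ∑ i ∈ Finset.range ℓ, (f (P (i+1)) - f (P i))
        ≤ ∑ i ∈ Finset.range ℓ, (ε * f Ω / k) := Finset.sum_le_sum hterm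
      _ = ℓ * (ε * f Ω / k) := by rw [Finset.sum_const, Finset.card_range]; ring
  have hmain : f g' - f g ≤ ε * f Ω := by
    have : (ℓ:ℝ) * (ε * f Ω / k) ≤ ε * f Ω := by
      rw [mul_div_assoc']
      rw [div_le_iff₀ hkpos]
      have hℓk : (ℓ:ℝ) ≤ k := by exact_mod_cast hℓ
      have hεΩ : 0 ≤ ε * f Ω := by positivity
      nlinarith [mul_le_mul_of_nonneg_right hℓk hεΩ]
    linarith
  refine ⟨hmain, fun Φ hΦ hΦg' => ?_⟩
  nlinarith
end

section
/- Telescoping bound via DR ratio: if f has DR ratio γ_d > 0 and v ≤ w with {w−v} = {s_1,…,s_ℓ}, then f(w) − f(v) ≤ (1/γ_d)·Σ_{i=1}^ℓ (f(v+s_i) − f(v)). -/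
/-- Telescoping bound via the DR ratio: `f(w) - f(v) ≤ (1/γd) Σ_{s ∈ {w-v}} δ_s(v)`. -/
theorem telescoping_dr_bound
    {S : Type*} [Fintype S] [DecidableEq S]
    (f : (S → ℕ) → ℝ) (γd : ℝ)
    (hnonneg : ∀ x : S → ℕ, 0 ≤ f x)
    (hmono : ∀ v w : S → ℕ, v ≤ w → f v ≤ f w)
    (hzero : f 0 = 0)
    (hγd : 0 < γd)
    (hDR : ∀ (s : S) (x y : S → ℕ), x ≤ y →
      γd * (f (y + unitVec s) - f y) ≤ f (x + unitVec s) - f x) :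
    ∀ v w : S → ℕ, v ≤ w →
      f w - f v ≤ (1 / γd) * ∑ s : S, ((w s - v s : ℕ) : ℝ) * (f (v + unitVec s) - f v) := by
  suffices H : ∀ (n : ℕ) (v w : S → ℕ), v ≤ w → (∑ s : S, (w s - v s)) = n →
      f w - f v ≤ (1 / γd) * ∑ s : S, ((w s - v s : ℕ) : ℝ) * (f (v + unitVec s) - f v) by
    intro v w hvw; exact H _ v w hvw rfl
  intro n
  induction n with
  | zero =>
    intro v w hvw hsum
    have hwv : w = v := by
      funext s
      have h0 : w s - v s = 0 :=
        (Finset.sum_eq_zero_iff.mp hsum) s (Finset.mem_univ s)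
      have h1 : v s ≤ w s := hvw s
      omega
    subst hwv
    have hterm : ∀ s : S, 0 ≤ ((w s - w s : ℕ) : ℝ) * (f (w + unitVec s) - f w) := by
      intro s
      apply mul_nonneg (by positivity)
      have : w ≤ w + unitVec s := by
        intro i; simp [unitVec]
      linarith [hmono w (w + unitVec s) this]
    have : 0 ≤ ∑ s : S, ((w s - w s : ℕ) : ℝ) * (f (w + unitVec s) - f w) :=
      Finset.sum_nonneg fun s _ => hterm s
    have h1 : 0 ≤ (1 / γd) := by positivity
    nlinarith
  | succ n ih =>
    intro v w hvw hsum
    -- pick s₀ with v s₀ < w s₀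
    have hex : ∃ s₀ : S, v s₀ < w s₀ := by
      by_contra h
      push_neg at h
      have : (∑ s : S, (w s - v s)) = 0 := by
        apply Finset.sum_eq_zero; intro s _
        have := h s; omega
      omega
    obtain ⟨s₀, hs₀⟩ := hex
    set w' : S → ℕ := fun i => w i - unitVec s₀ i with hw'def
    have hw : w' + unitVec s₀ = w := by
      funext i
      simp only [hw'def, Pi.add_apply, unitVec]
      split_ifs with h
      · subst h; omega
      · omega
    have hv' : v ≤ w' := by
      intro i
      have h1 : v i ≤ w i := hvw i
      simp only [hw'def, unitVec]
      split_ifs with h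
      · subst h; omega
      · omega
    have hdiff : ∀ s : S, w s - v s = (w' s - v s) + (if s = s₀ then 1 else 0) := by
      intro s
      have h1 : v s ≤ w s := hvw s
      simp only [hw'def, unitVec]
      split_ifs with h
      · subst h; omega
      · omega
    have hsum' : (∑ s : S, (w' s - v s)) = n := by
      have : (∑ s : S, (w s - v s)) = (∑ s : S, (w' s - v s)) + ∑ s : S, (if s = s₀ then 1 else 0) := by
        rw [← Finset.sum_add_distrib]
        exact Finset.sum_congr rfl fun s _ => hdiff s
      simp [Finset.sum_ite_eq'] at this
      omega
    have IH := ih v w' hv' hsum'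
    have hDR' := hDR s₀ v w' hv'
    rw [hw] at hDR'
    -- f w - f w' ≤ (1/γd) * (f (v + unitVec s₀) - f v)
    have hstep : f w - f w' ≤ (1 / γd) * (f (v + unitVec s₀) - f v) := by
      rw [div_mul_eq_mul_div, le_div_iff₀ hγd]
      linarith
    -- sum decomposition over ℝ
    have hsumR : (∑ s : S, ((w s - v s : ℕ) : ℝ) * (f (v + unitVec s) - f v))
        = (∑ s : S, ((w' s - v s : ℕ) : ℝ) * (f (v + unitVec s) - f v))
          + (f (v + unitVec s₀) - f v) := by
      have : ∀ s : S, ((w s - v s : ℕ) : ℝ) * (f (v + unitVec s) - f v)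
          = ((w' s - v s : ℕ) : ℝ) * (f (v + unitVec s) - f v)
            + (if s = s₀ then 1 else 0 : ℝ) * (f (v + unitVec s) - f v) := by
        intro s
        rw [← add_mul]
        congr 1
        rw [hdiff s]
        push_cast
        by_cases h : s = s₀ <;> simp [h]
      rw [Finset.sum_congr rfl fun s _ => this s, Finset.sum_add_distrib]
      congr 1
      simp [Finset.sum_ite_eq', ite_mul]
    rw [hsumR, mul_add]
    linarith
end

section
/- Monotonicity of β in FastGreedy: if at some iteration β ≤ γ_d (the DR ratio of f), and for every s ∈ S there exists g^s ≤ g with f(g^s + s) − f(g^s) < β·κ·m, then for every s ∈ S, f(g + s) − f(g) ≤ κ·m; hence max_s (f(g+s)−f(g)) ≤ κ·m. -/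
/-- Core step of Lemma 2 (monotonicity of β in FastGreedy): if `β ≤ γd` and each `s`
has a witness `gˢ ≤ g` with gain below `β κ m`, then every current marginal gain is
at most `κ m`. -/
theorem beta_step
    {S : Type*} [DecidableEq S]
    (f : (S → ℕ) → ℝ) (g : S → ℕ) (γd β κ m : ℝ)
    (hmono : ∀ v w : S → ℕ, v ≤ w → f v ≤ f w)
    (hγd0 : 0 < γd) (hγd1 : γd ≤ 1)
    (hβ : β ≤ γd)
    (hκ : 0 < κ) (hκ1 : κ < 1)
    (hm : 0 < m)
    (hDR : ∀ (s : S) (v w : S → ℕ), v ≤ w →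
      γd * (f (w + unitVec s) - f w) ≤ f (v + unitVec s) - f v)
    (hwit : ∀ s : S, ∃ gs : S → ℕ, gs ≤ g ∧
      f (gs + unitVec s) - f gs < β * κ * m) :
    ∀ s : S, f (g + unitVec s) - f g ≤ κ * m := by
  intro s
  obtain ⟨gs, hle, hlt⟩ := hwit s
  have h1 := hDR s gs g hle
  have h2 : γd * (f (g + unitVec s) - f g) ≤ γd * (κ * m) := by
    have : β * κ * m ≤ γd * (κ * m) := by
      have := mul_le_mul_of_nonneg_right hβ (le_of_lt (mul_pos hκ hm))
      linarith [this]
    nlinarith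
  exact le_of_mul_le_mul_left h2 hγd0
end

section
/- Submodularity-ratio step bound: let f be monotone with submodularity ratio γ_s, let g ≤ b, Ω ≤ b with ‖Ω‖₁ ≤ k, and suppose f(g+s) − f(g) ≤ D for every s in the multiset {(Ω ∨ g) − g}. Then γ_s·(f(Ω) − f(g)) ≤ k·D. -/
/-- Submodularity-ratio step bound: if every element of the multiset `{(Ω ∨ g) − g}`
has marginal gain at most `D` at `g`, then `γs (f(Ω) − f(g)) ≤ k D`. -/
theorem submodularity_ratio_step_bound
    {S : Type*} [Fintype S] [DecidableEq S]
    (f : (S → ℕ) → ℝ) (γs D : ℝ) (k : ℕ) (g Ω : S → ℕ)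
    (hnonneg : ∀ x : S → ℕ, 0 ≤ f x)
    (hmono : ∀ v w : S → ℕ, v ≤ w → f v ≤ f w)
    (hzero : f 0 = 0)
    (hγs0 : 0 ≤ γs) (hγs1 : γs ≤ 1)
    (hsub : ∀ v w : S → ℕ, v ≤ w →
      γs * (f w - f v) ≤ ∑ s : S, ((w s - v s : ℕ) : ℝ) * (f (v + unitVec s) - f v))
    (hk : ∑ s : S, Ω s ≤ k)
    (hD0 : 0 ≤ D)
    (hD : ∀ s : S, g s < (Ω ⊔ g) s → f (g + unitVec s) - f g ≤ D) :
    γs * (f Ω - f g) ≤ (k : ℝ) * D := by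
  have hle : g ≤ Ω ⊔ g := le_sup_right
  have h1 : γs * (f Ω - f g) ≤ γs * (f (Ω ⊔ g) - f g) := by
    apply mul_le_mul_of_nonneg_left _ hγs0
    have := hmono Ω (Ω ⊔ g) le_sup_left
    linarith
  have h2 := hsub g (Ω ⊔ g) hle
  have h3 : ∑ s : S, (((Ω ⊔ g) s - g s : ℕ) : ℝ) * (f (g + unitVec s) - f g)
      ≤ ∑ s : S, (((Ω ⊔ g) s - g s : ℕ) : ℝ) * D := by
    apply Finset.sum_le_sum
    intro s _
    rcases Nat.eq_zero_or_pos ((Ω ⊔ g) s - g s) with h | h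
    · rw [show ((Ω ⊔ g) s - g s : ℕ) = 0 from h]; simp
    · have hgs : g s < (Ω ⊔ g) s := Nat.lt_of_sub_pos h
      exact mul_le_mul_of_nonneg_left (hD s hgs) (by positivity)
  have h4 : ∑ s : S, (((Ω ⊔ g) s - g s : ℕ) : ℝ) * D ≤ (k : ℝ) * D := by
    rw [← Finset.sum_mul]
    apply mul_le_mul_of_nonneg_right _ hD0
    have hsum : ∑ s : S, ((Ω ⊔ g) s - g s) ≤ ∑ s : S, Ω s := by
      apply Finset.sum_le_sum
      intro s _
      simp only [Pi.sup_apply]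
      omega
    calc ∑ s : S, (((Ω ⊔ g) s - g s : ℕ) : ℝ)
        = ((∑ s : S, ((Ω ⊔ g) s - g s) : ℕ) : ℝ) := by push_cast; ring
      _ ≤ (k : ℝ) := by exact_mod_cast hsum.trans hk
  linarith
end
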